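/- Let C = ℝ₊e₁ + … + ℝ₊e_n ⊆ ℝ^m be a polyhedral cone and let f : C → V be a superlinear map into an ordered real vector space V, i.e. λf(x) + μf(y) ≤ f(λx + μy) for all x, y ∈ C and λ, μ ≥ 0. Assume there is a point s₀ = Σᵢ sᵢeᵢ with all sᵢ > 0 real such that f(s₀) = Σᵢ sᵢf(eᵢ). Then f(Σᵢ pᵢeᵢ) = Σᵢ pᵢf(eᵢ) for all real p₁, …, p_n ≥ 0; in particular, f is linear on C. -/

import Mathlib

/-- **Linearity of a superlinear map from one point (cone version).**
Let `C = ℝ₊e₁ + … + ℝ₊eₙ ⊆ ℝᵐ` be a polyhedral cone and `f : C → V` a superlinear map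
into an ordered real vector space `V`. If there is a point `s₀ = Σᵢ sᵢ • eᵢ` with all
`sᵢ > 0` real such that `f s₀ = Σᵢ sᵢ • f eᵢ`, then
`f (Σᵢ pᵢ • eᵢ) = Σᵢ pᵢ • f eᵢ` for all real `pᵢ ≥ 0`; in particular `f` is linear on `C`. -/
theorem superlinear_linear_of_linear_at_point
    {V : Type*} [AddCommGroup V] [PartialOrder V] [IsOrderedAddMonoid V] [Module ℝ V]
    (hsmul : ∀ c : ℝ, 0 ≤ c → ∀ a b : V, a ≤ b → c • a ≤ c • b)
    (m n : ℕ) (e : Fin n → Fin m → ℝ)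
    (C : Set (Fin m → ℝ))
    (hC : C = {x | ∃ c : Fin n → ℝ, (∀ i, 0 ≤ c i) ∧ x = ∑ i, c i • e i})
    (f : (Fin m → ℝ) → V)
    (hsuper : ∀ x ∈ C, ∀ y ∈ C, ∀ a b : ℝ, 0 ≤ a → 0 ≤ b →
      a • f x + b • f y ≤ f (a • x + b • y))
    (s : Fin n → ℝ) (hs : ∀ i, 0 < s i)
    (hadd : f (∑ i, s i • e i) = ∑ i, s i • f (e i)) :
    ∀ p : Fin n → ℝ, (∀ i, 0 ≤ p i) →
      f (∑ i, p i • e i) = ∑ i, p i • f (e i) := by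
  -- membership of partial cone combinations in C
  have memCT : ∀ (T : Finset (Fin n)) (q : Fin n → ℝ), (∀ i, 0 ≤ q i) →
      (∑ i ∈ T, q i • e i) ∈ C := by
    intro T q hq
    rw [hC]
    refine ⟨fun i => if i ∈ T then q i else 0, ?_, ?_⟩
    · intro i; dsimp only; split_ifs; exacts [hq _, le_rfl]
    · simp only [ite_smul, zero_smul, Finset.sum_ite_mem, Finset.univ_inter]
  have memC : ∀ q : Fin n → ℝ, (∀ i, 0 ≤ q i) → (∑ i, q i • e i) ∈ C :=
    fun q hq => memCT Finset.univ q hq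
  have h0C : (0 : Fin m → ℝ) ∈ C := by
    simpa using memCT ∅ (fun _ => 0) (fun _ => le_rfl)
  have hf0 : (0 : V) ≤ f 0 := by
    have := hsuper 0 h0C 0 h0C 0 0 le_rfl le_rfl
    simpa using this
  have heC : ∀ j, e j ∈ C := by
    intro j
    have := memCT {j} (fun _ => 1) (fun _ => zero_le_one)
    simpa using this
  -- the easy inequality, by induction on finsets
  have key : ∀ (T : Finset (Fin n)) (q : Fin n → ℝ), (∀ i, 0 ≤ q i) →
      ∑ i ∈ T, q i • f (e i) ≤ f (∑ i ∈ T, q i • e i) := by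
    intro T
    induction T using Finset.induction_on with
    | empty => intro q hq; simpa using hf0
    | insert _ _ hnotmem =>
      rename_i a T ih
      intro q hq
      rw [Finset.sum_insert hnotmem, Finset.sum_insert hnotmem]
      have h1 := hsuper (e a) (heC a) (∑ i ∈ T, q i • e i) (memCT T q hq)
        (q a) 1 (hq a) zero_le_one
      rw [one_smul, one_smul] at h1
      calc q a • f (e a) + ∑ i ∈ T, q i • f (e i)
          ≤ q a • f (e a) + f (∑ i ∈ T, q i • e i) := add_le_add_right (ih q hq) _
        _ ≤ f (q a • e a + ∑ i ∈ T, q i • e i) := h1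
  intro p hp
  have hQle : ∑ i, p i • f (e i) ≤ f (∑ i, p i • e i) := key Finset.univ p hp
  -- choose t
  set t : ℝ := (1 + ∑ i, p i / s i)⁻¹ with ht_def
  have hsum_nonneg : 0 ≤ ∑ i, p i / s i :=
    Finset.sum_nonneg fun i _ => div_nonneg (hp i) (hs i).le
  have hA : (0:ℝ) < 1 + ∑ j, p j / s j := by linarith
  have htpos : 0 < t := by
    rw [ht_def]; exact inv_pos.2 hA
  have ht : ∀ i, t * p i ≤ s i := by
    intro i
    have h1 : p i / s i ≤ 1 + ∑ j, p j / s j := by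
      have := Finset.single_le_sum (f := fun j => p j / s j)
        (fun j _ => div_nonneg (hp j) (hs j).le) (Finset.mem_univ i)
      linarith
    have hi : p i ≤ (1 + ∑ j, p j / s j) * s i := by
      rwa [div_le_iff₀ (hs i)] at h1
    calc t * p i ≤ t * ((1 + ∑ j, p j / s j) * s i) :=
          mul_le_mul_of_nonneg_left hi htpos.le
      _ = s i := by
          rw [ht_def, ← mul_assoc, inv_mul_cancel₀ hA.ne', one_mul]
  have hRnn : ∀ i, 0 ≤ s i - t * p i := fun i => sub_nonneg.2 (ht i)
  set P : Fin m → ℝ := ∑ i, p i • e i with hP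
  set R : Fin m → ℝ := ∑ i, (s i - t * p i) • e i with hR
  have hsplit : (∑ i, s i • e i) = t • P + R := by
    rw [hP, hR, Finset.smul_sum, ← Finset.sum_add_distrib]
    refine Finset.sum_congr rfl fun i _ => ?_
    rw [smul_smul, ← add_smul]
    congr 1; ring
  have hRf : ∑ i, (s i - t * p i) • f (e i) ≤ f R := key Finset.univ _ hRnn
  have h2 := hsuper P (memC p hp) R (memCT Finset.univ _ hRnn) t 1 htpos.le zero_le_one
  simp only [one_smul] at h2
  rw [← hsplit, hadd] at h2
  have hsplitV : (∑ i, s i • f (e i)) = t • (∑ i, p i • f (e i)) + ∑ i, (s i - t * p i) • f (e i) := by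
    rw [Finset.smul_sum, ← Finset.sum_add_distrib]
    refine Finset.sum_congr rfl fun i _ => ?_
    rw [smul_smul, ← add_smul]
    congr 1; ring
  have h3 : t • f P + f R ≤ t • (∑ i, p i • f (e i)) + f R := by
    calc t • f P + f R ≤ ∑ i, s i • f (e i) := h2
      _ = t • (∑ i, p i • f (e i)) + ∑ i, (s i - t * p i) • f (e i) := hsplitV
      _ ≤ t • (∑ i, p i • f (e i)) + f R := add_le_add_right hRf _
  have h4 : t • f P ≤ t • (∑ i, p i • f (e i)) := le_of_add_le_add_right h3
  have h5 := hsmul t⁻¹ (inv_nonneg.2 htpos.le) _ _ h4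
  rw [smul_smul, smul_smul, inv_mul_cancel₀ htpos.ne', one_smul, one_smul] at h5
  exact le_antisymm h5 hQle
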